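/- Let φ: E → F be a lattice homomorphism from a vector lattice E into a normed lattice F. Then φ is almost interval preserving if and only if the norm closure of φ(E) is an ideal in F. -/

import Mathlib

open Set Filter Topology

theorem latticeHom_almostIntervalPreserving_iff_closure_range_ideal
    {E F : Type*}
    [AddCommGroup E] [Lattice E] [CovariantClass E E (· + ·) (· ≤ ·)]
    [Module ℝ E] [PosSMulMono ℝ E]
    [NormedAddCommGroup F] [Lattice F] [HasSolidNorm F] [IsOrderedAddMonoid F]
    [NormedSpace ℝ F]
    (φ : E →ₗ[ℝ] F)
    (hom : ∀ x y : E, φ (x ⊔ y) = φ x ⊔ φ y) :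
    ((∀ x : E, 0 ≤ x → 0 ≤ φ x) ∧
        ∀ x : E, 0 ≤ x → Icc (0 : F) (φ x) = closure (φ '' Icc 0 x)) ↔
      (∀ u v : F, v ∈ closure (Set.range φ) → |u| ≤ |v| → u ∈ closure (Set.range φ)) := by
  -- basic derived facts
  have hinf : ∀ a b : E, φ (a ⊓ b) = φ a ⊓ φ b := by
    intro a b
    have h1 : a ⊓ b = a + b - (a ⊔ b) := by
      rw [← inf_add_sup a b]; abel
    have h2 : φ a ⊓ φ b = φ a + φ b - (φ a ⊔ φ b) := by
      rw [← inf_add_sup (φ a) (φ b)]; abel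
    rw [h1, map_sub, map_add, hom, h2]
  have habs : ∀ a : E, φ |a| = |φ a| := by
    intro a
    simp only [abs]
    rw [hom, map_neg]
  have hpos : ∀ x : E, 0 ≤ x → 0 ≤ φ x := by
    intro x hx
    have : φ (x ⊔ 0) = φ x ⊔ 0 := by rw [hom, map_zero]
    rw [sup_eq_left.mpr hx] at this
    rw [this]; exact le_sup_right
  have hmono : ∀ {a b : E}, a ≤ b → φ a ≤ φ b := by
    intro a b hab
    have := hpos (b - a) (sub_nonneg.mpr hab)
    rw [map_sub] at this
    exact sub_nonneg.mp this
  constructor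
  · rintro ⟨hp, h⟩ u v hv huv
    have cabs : Continuous fun y : F => |y| := by
      simp only [abs]; exact continuous_id.sup continuous_neg
    -- closure of range is a submodule (closed under sub)
    have hclsub : ∀ a b : F, a ∈ closure (Set.range φ) → b ∈ closure (Set.range φ) →
        a - b ∈ closure (Set.range φ) := by
      intro a b ha hb
      have : (a, b) ∈ closure (Set.range φ ×ˢ Set.range φ) := by
        rw [closure_prod_eq]; exact ⟨ha, hb⟩
      have hcont : Continuous fun p : F × F => p.1 - p.2 := continuous_fst.sub continuous_snd
      have := (image_closure_subset_closure_image hcont) (mem_image_of_mem _ this)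
      refine closure_mono ?_ this
      rintro _ ⟨⟨p, q⟩, ⟨⟨xp, hxp⟩, ⟨xq, hxq⟩⟩, rfl⟩
      exact ⟨xp - xq, by simp [map_sub, hxp, hxq]⟩
    -- |v| ∈ closure range
    have hav : |v| ∈ closure (Set.range φ) := by
      have := (image_closure_subset_closure_image cabs) (mem_image_of_mem _ hv)
      refine closure_mono ?_ this
      rintro _ ⟨w, ⟨x, rfl⟩, rfl⟩
      exact ⟨|x|, habs x⟩
    -- claim: 0 ≤ w ≤ |v| → w ∈ closure range
    have claim : ∀ w : F, 0 ≤ w → w ≤ |v| → w ∈ closure (Set.range φ) := by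
      intro w hw0 hwv
      obtain ⟨f, hf, hft⟩ := mem_closure_iff_seq_limit.mp hav
      choose x hx using hf
      have hmem : ∀ n, w ⊓ φ |x n| ∈ closure (Set.range φ) := by
        intro n
        have hIcc : w ⊓ φ |x n| ∈ Icc (0 : F) (φ |x n|) :=
          ⟨le_inf hw0 (hpos _ (abs_nonneg _)), inf_le_right⟩
        rw [h |x n| (abs_nonneg _)] at hIcc
        refine closure_mono ?_ hIcc
        rintro _ ⟨y, _, rfl⟩; exact ⟨y, rfl⟩
      have htend : Tendsto (fun n => w ⊓ φ |x n|) atTop (𝓝 w) := by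
        have h1 : Tendsto (fun n => w ⊓ |f n|) atTop (𝓝 (w ⊓ |(|v|)|)) := by
          exact ((continuous_const.inf cabs).tendsto _).comp hft
        have h2 : w ⊓ |(|v|)| = w := by
          rw [abs_abs]; exact inf_eq_left.mpr hwv
        rw [h2] at h1
        convert h1 using 2 with n
        rw [habs, hx n]
      exact isClosed_closure.mem_of_tendsto htend (Eventually.of_forall hmem)
    have hp1 : u⁺ ≤ |u| := by
      rw [posPart]; exact sup_le (le_abs_self u) (abs_nonneg u)
    have hn1 : u⁻ ≤ |u| := by
      rw [negPart]; exact sup_le (neg_le_abs u) (abs_nonneg u)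
    have hup : u⁺ ∈ closure (Set.range φ) :=
      claim _ (le_sup_right) (hp1.trans huv)
    have hun : u⁻ ∈ closure (Set.range φ) :=
      claim _ (le_sup_right) (hn1.trans huv)
    have := hclsub _ _ hup hun
    rwa [posPart_sub_negPart] at this
  · intro hI
    refine ⟨hpos, fun x hx => ?_⟩
    apply Subset.antisymm
    · rintro u ⟨hu0, hux⟩
      have hux' : |u| ≤ |φ x| := by
        rw [abs_of_nonneg hu0, abs_of_nonneg (hpos x hx)]; exact hux
      have hu : u ∈ closure (Set.range φ) :=
        hI u (φ x) (subset_closure (mem_range_self x)) hux'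
      obtain ⟨f, hf, hft⟩ := mem_closure_iff_seq_limit.mp hu
      choose z hz using hf
      have hym : ∀ n, φ ((z n ⊔ 0) ⊓ x) ∈ φ '' Icc 0 x := by
        intro n
        exact mem_image_of_mem _ ⟨le_inf le_sup_right hx, inf_le_right⟩
      have htend : Tendsto (fun n => φ ((z n ⊔ 0) ⊓ x)) atTop (𝓝 u) := by
        have h1 : Tendsto (fun n => (f n ⊔ 0) ⊓ φ x) atTop (𝓝 ((u ⊔ 0) ⊓ φ x)) :=
          (((continuous_id.sup continuous_const).inf continuous_const).tendsto _).comp hft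
        have h2 : (u ⊔ 0) ⊓ φ x = u := by
          rw [sup_eq_left.mpr hu0]; exact inf_eq_left.mpr hux
        rw [h2] at h1
        convert h1 using 2 with n
        rw [hinf, hom, map_zero, hz n]
      exact mem_closure_of_tendsto htend (Eventually.of_forall hym)
    · refine closure_minimal ?_ isClosed_Icc
      rintro _ ⟨y, ⟨hy0, hyx⟩, rfl⟩
      exact ⟨hpos y hy0, hmono hyx⟩
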